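/- Let N ≥ 2 and x ∈ ℝ^N with 0 ≤ x_i ≤ 1 for all i, ∑_i x_i = 1, and sample standard deviation std(x) = √((1/(N-1))·∑_i (x_i − μ)²) = 1/√N, where μ = (1/N)∑_i x_i. Then exactly one entry of x equals 1 and all other entries equal 0. -/

import Mathlib

open Finset

theorem stmt_0 (N : ℕ) (hN : 2 ≤ N) (x : Fin N → ℝ)
    (hbox : ∀ i, 0 ≤ x i ∧ x i ≤ 1)
    (hsum : ∑ i, x i = 1)
    (hstd : Real.sqrt ((1 / ((N : ℝ) - 1)) * ∑ i, (x i - (1 / (N : ℝ)) * ∑ j, x j) ^ 2)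
      = 1 / Real.sqrt N) :
    ∃! j : Fin N, x j = 1 ∧ ∀ i, i ≠ j → x i = 0 := by
  have hNR : (2:ℝ) ≤ (N:ℝ) := by exact_mod_cast hN
  have hN1 : (0:ℝ) < (N:ℝ) - 1 := by linarith
  have hN0 : (0:ℝ) < (N:ℝ) := by linarith
  rw [hsum] at hstd
  set E := (1 / ((N:ℝ) - 1)) * ∑ i, (x i - (1 / (N:ℝ)) * 1) ^ 2 with hEdef
  have hEnn : 0 ≤ E := by
    apply mul_nonneg (by positivity)
    exact Finset.sum_nonneg fun i _ => sq_nonneg _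
  have hE : E = 1 / (N:ℝ) := by
    have h1 : Real.sqrt E ^ 2 = E := Real.sq_sqrt hEnn
    have h2 : (1 / Real.sqrt (N:ℝ)) ^ 2 = 1 / (N:ℝ) := by
      rw [div_pow, one_pow, Real.sq_sqrt hN0.le]
    rw [← h1, hstd, h2]
  have expand : ∑ i, (x i - (1 / (N:ℝ)) * 1) ^ 2
      = ∑ i, x i ^ 2 - 2 * ((1 / (N:ℝ)) * 1) * (∑ i, x i) + (N:ℝ) * ((1 / (N:ℝ)) * 1) ^ 2 := by
    have h : ∀ i : Fin N, (x i - (1 / (N:ℝ)) * 1) ^ 2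
        = x i ^ 2 - 2 * ((1 / (N:ℝ)) * 1) * x i + ((1 / (N:ℝ)) * 1) ^ 2 := fun i => by ring
    simp_rw [h, Finset.sum_add_distrib, Finset.sum_sub_distrib, ← Finset.mul_sum,
      Finset.sum_const, card_univ, Fintype.card_fin, nsmul_eq_mul]
  have hsq : ∑ i, x i ^ 2 = 1 := by
    have hE2 : ∑ i, (x i - (1 / (N:ℝ)) * 1) ^ 2 = ((N:ℝ) - 1) / (N:ℝ) := by
      have := hE
      rw [hEdef] at this
      field_simp at this ⊢
      linarith
    rw [expand, hsum] at hE2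
    field_simp at hE2
    have h4 : (0:ℝ) < (N:ℝ)^4 := by positivity
    have h5 : (∑ i, x i ^ 2) * (N:ℝ)^4 = 1 * (N:ℝ)^4 := by linear_combination (N:ℝ)^3 * hE2
    exact mul_right_cancel₀ h4.ne' h5
  have hz : ∑ i, (x i - x i ^ 2) = 0 := by
    rw [Finset.sum_sub_distrib, hsum, hsq]; ring
  have hterm : ∀ i ∈ (univ : Finset (Fin N)), x i - x i ^ 2 = 0 := by
    refine (Finset.sum_eq_zero_iff_of_nonneg ?_).mp hz
    intro i _
    nlinarith [(hbox i).1, (hbox i).2]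
  have h01 : ∀ i : Fin N, x i = 0 ∨ x i = 1 := by
    intro i
    have := hterm i (Finset.mem_univ i)
    have : x i * (1 - x i) = 0 := by nlinarith
    rcases mul_eq_zero.mp this with h | h
    · exact Or.inl h
    · exact Or.inr (by linarith)
  have hex : ∃ j, x j ≠ 0 := by
    by_contra h
    push_neg at h
    have : ∑ i, x i = 0 := Finset.sum_eq_zero fun i _ => h i
    rw [hsum] at this; norm_num at this
  obtain ⟨j, hj⟩ := hex
  have hxj : x j = 1 := (h01 j).resolve_left hj
  have hrest : ∀ i, i ≠ j → x i = 0 := by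
    have hsum' : ∑ i ∈ univ.erase j, x i = 0 := by
      have := Finset.sum_erase_add univ x (Finset.mem_univ j)
      rw [hsum, hxj] at this
      linarith
    intro i hi
    have := (Finset.sum_eq_zero_iff_of_nonneg (fun i _ => (hbox i).1)).mp hsum'
    exact this i (Finset.mem_erase.mpr ⟨hi, Finset.mem_univ i⟩)
  refine ⟨j, ⟨hxj, hrest⟩, ?_⟩
  intro y ⟨hy1, _⟩
  by_contra hne
  have := hrest y hne
  rw [hy1] at this; norm_num at this
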